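/- For s'≥s≥2 with s and s' both even, q(P_s⊠P_{s'}) ≤ s+s'−2: choosing A∈S(P_s) with spectrum {±1,±2,…,±2^{s/2−1}} and A'∈S(P_{s'}) with spectrum {±1,±2,…,±2^{s'/2−1}} (which exist with SSP and nonzero diagonals by the nonzero-diagonal realization theorem), the Kronecker product A⊗A' lies in S(P_s⊠P_{s'}) and has at most s+s'−2 distinct eigenvalues {±1,±2,…,±2^{s/2+s'/2−2}}. -/

import Mathlib

open Matrix Kronecker

/-- `S(G)`: real symmetric matrices whose off-diagonal nonzero pattern is the edge set of `G`. -/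
def inS {V : Type*} (G : SimpleGraph V) (A : Matrix V V ℝ) : Prop :=
  A.IsSymm ∧ ∀ i j, i ≠ j → (A i j ≠ 0 ↔ G.Adj i j)

/-- `q(G)`: the minimum number of distinct eigenvalues among matrices in `S(G)`. -/
noncomputable def qGraph {V : Type*} [Fintype V] [DecidableEq V] (G : SimpleGraph V) : ℕ :=
  sInf {k : ℕ | ∃ A : Matrix V V ℝ, inS G A ∧ (spectrum ℝ A).ncard = k}

/-- The strong product of two simple graphs. -/
def strongProd {V W : Type*} (G : SimpleGraph V) (G' : SimpleGraph W) :
    SimpleGraph (V × W) where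
  Adj p q := (p.1 = q.1 ∧ G'.Adj p.2 q.2) ∨ (p.2 = q.2 ∧ G.Adj p.1 q.1) ∨
      (G.Adj p.1 q.1 ∧ G'.Adj p.2 q.2)
  symm := by
    constructor
    rintro p q (⟨h1, h2⟩ | ⟨h1, h2⟩ | ⟨h1, h2⟩)
    · exact Or.inl ⟨h1.symm, h2.symm⟩
    · exact Or.inr (Or.inl ⟨h1.symm, h2.symm⟩)
    · exact Or.inr (Or.inr ⟨h1.symm, h2.symm⟩)
  loopless := by
    constructor
    rintro p (⟨-, h⟩ | ⟨-, h⟩ | ⟨h, -⟩)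
    · exact G'.loopless.irrefl _ h
    · exact G.loopless.irrefl _ h
    · exact G.loopless.irrefl _ h

/-- The spectrum of a Kronecker product of real symmetric matrices consists of
products of eigenvalues. -/
lemma spectrum_kron_subset {n n' : Type*} [Fintype n] [Fintype n'] [DecidableEq n]
    [DecidableEq n'] (A : Matrix n n ℝ) (B : Matrix n' n' ℝ)
    (hA : A.IsHermitian) (hB : B.IsHermitian) :
    spectrum ℝ (A ⊗ₖ B) ⊆ Set.image2 (· * ·) (spectrum ℝ A) (spectrum ℝ B) := by
  set U := (hA.eigenvectorUnitary : Matrix n n ℝ) with hUdef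
  set V := (hB.eigenvectorUnitary : Matrix n' n' ℝ) with hVdef
  have hU1 : U * star U = 1 := Matrix.mem_unitaryGroup_iff.mp hA.eigenvectorUnitary.2
  have hU2 : star U * U = 1 := Matrix.mem_unitaryGroup_iff'.mp hA.eigenvectorUnitary.2
  have hV1 : V * star V = 1 := Matrix.mem_unitaryGroup_iff.mp hB.eigenvectorUnitary.2
  have hV2 : star V * V = 1 := Matrix.mem_unitaryGroup_iff'.mp hB.eigenvectorUnitary.2
  set u : (Matrix (n × n') (n × n') ℝ)ˣ :=
    ⟨U ⊗ₖ V, star U ⊗ₖ star V,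
      by rw [← Matrix.mul_kronecker_mul, hU1, hV1, Matrix.one_kronecker_one],
      by rw [← Matrix.mul_kronecker_mul, hU2, hV2, Matrix.one_kronecker_one]⟩ with hudef
  have key : A ⊗ₖ B =
      (↑u : Matrix (n × n') (n × n') ℝ) *
        Matrix.diagonal (fun p : n × n' => hA.eigenvalues p.1 * hB.eigenvalues p.2) *
        (↑u⁻¹ : Matrix (n × n') (n × n') ℝ) := by
    conv_lhs => rw [hA.spectral_theorem, hB.spectral_theorem]
    simp only [Unitary.conjStarAlgAut_apply]
    rw [Matrix.mul_kronecker_mul, Matrix.mul_kronecker_mul, Matrix.diagonal_kronecker_diagonal]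
    simp only [hudef, RCLike.ofReal_real_eq_id, Function.comp_def, id_eq]
    rfl
  rw [key, spectrum.units_conjugate, spectrum_diagonal]
  rintro x ⟨p, rfl⟩
  exact ⟨hA.eigenvalues p.1, hA.eigenvalues_mem_spectrum_real p.1,
    hB.eigenvalues p.2, hB.eigenvalues_mem_spectrum_real p.2, rfl⟩

/-- The set `{±1, ±2, …, ±2^(n-1)}`. -/
noncomputable def pmPows (n : ℕ) : Finset ℝ :=
  (Finset.range n).image (fun k => (2 : ℝ) ^ k) ∪
    (Finset.range n).image (fun k => -((2 : ℝ) ^ k))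

lemma pmPows_card (n : ℕ) : (pmPows n).card = 2 * n := by
  have hinj : Function.Injective (fun k : ℕ => (2 : ℝ) ^ k) :=
    pow_right_injective₀ (by norm_num) (by norm_num)
  rw [pmPows, Finset.card_union_of_disjoint, Finset.card_image_of_injective _ hinj,
    Finset.card_image_of_injective _ (fun a b hab => hinj (neg_injective hab)),
    Finset.card_range, two_mul]
  · rw [Finset.disjoint_left]
    rintro x hx hx'
    simp only [Finset.mem_image, Finset.mem_range] at hx hx'
    obtain ⟨a, -, rfl⟩ := hx
    obtain ⟨b, -, hb⟩ := hx'
    have h1 : (0 : ℝ) < 2 ^ a := by positivity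
    have h2 : (0 : ℝ) < 2 ^ b := by positivity
    linarith

lemma zero_not_mem_pmPows (n : ℕ) : (0 : ℝ) ∉ pmPows n := by
  simp only [pmPows, Finset.mem_union, Finset.mem_image, Finset.mem_range, not_or]
  constructor <;> rintro ⟨a, -, ha⟩ <;>
    · have : (0 : ℝ) < 2 ^ a := by positivity
      linarith

lemma mem_pmPows {n : ℕ} {x : ℝ} :
    x ∈ pmPows n ↔ ∃ k < n, x = 2 ^ k ∨ x = -(2 ^ k) := by
  simp only [pmPows, Finset.mem_union, Finset.mem_image, Finset.mem_range]
  constructor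
  · rintro (⟨a, ha, rfl⟩ | ⟨a, ha, rfl⟩)
    · exact ⟨a, ha, Or.inl rfl⟩
    · exact ⟨a, ha, Or.inr rfl⟩
  · rintro ⟨a, ha, rfl | rfl⟩
    · exact Or.inl ⟨a, ha, rfl⟩
    · exact Or.inr ⟨a, ha, rfl⟩

lemma mul_mem_pmPows {a b : ℕ} (ha : 1 ≤ a) (hb : 1 ≤ b) {x y : ℝ}
    (hx : x ∈ pmPows a) (hy : y ∈ pmPows b) : x * y ∈ pmPows (a + b - 1) := by
  rw [mem_pmPows] at hx hy ⊢
  obtain ⟨i, hi, hxi⟩ := hx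
  obtain ⟨j, hj, hyj⟩ := hy
  refine ⟨i + j, by omega, ?_⟩
  rcases hxi with rfl | rfl <;> rcases hyj with rfl | rfl <;>
    simp [pow_add]

theorem stmt19 (s s' : ℕ) (hs : 2 ≤ s) (hss' : s ≤ s') (hes : Even s) (hes' : Even s')
    -- nonzero-diagonal spectrum realization for paths, assumed as a hypothesis
    (hreal : ∀ (m : ℕ) (S : Finset ℝ), S.card = m → (0 : ℝ) ∉ S →
      ∃ A : Matrix (Fin m) (Fin m) ℝ, inS (SimpleGraph.pathGraph m) A ∧
        (∀ i, A i i ≠ 0) ∧ spectrum ℝ A = ↑S)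
    -- Kronecker products of matrices with nonzero diagonals realize the strong product
    (hkron : ∀ (m m' : ℕ) (G : SimpleGraph (Fin m)) (G' : SimpleGraph (Fin m'))
        (A : Matrix (Fin m) (Fin m) ℝ) (A' : Matrix (Fin m') (Fin m') ℝ),
      inS G A → inS G' A' → (∀ i, A i i ≠ 0) → (∀ i, A' i i ≠ 0) →
        inS (strongProd G G') (A ⊗ₖ A')) :
    qGraph (strongProd (SimpleGraph.pathGraph s) (SimpleGraph.pathGraph s')) ≤ s + s' - 2 := by
  obtain ⟨t, ht⟩ := hes
  obtain ⟨t', ht'⟩ := hes'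
  have hst : s = 2 * t := by omega
  have hst' : s' = 2 * t' := by omega
  have ht1 : 1 ≤ t := by omega
  have ht1' : 1 ≤ t' := by omega
  obtain ⟨A, hAS, hAd, hAspec⟩ := hreal s (pmPows t)
    (by rw [pmPows_card]; omega) (zero_not_mem_pmPows t)
  obtain ⟨B, hBS, hBd, hBspec⟩ := hreal s' (pmPows t')
    (by rw [pmPows_card]; omega) (zero_not_mem_pmPows t')
  have hM := hkron s s' _ _ A B hAS hBS hAd hBd
  have hAH : A.IsHermitian := by
    have h := hAS.1
    rw [Matrix.IsHermitian, ← Matrix.IsSymm.eq h]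
    ext i j
    simp only [Matrix.conjTranspose_apply, Matrix.transpose_apply, star_trivial]
    exact (h.apply i j).symm
  have hBH : B.IsHermitian := by
    have h := hBS.1
    rw [Matrix.IsHermitian, ← Matrix.IsSymm.eq h]
    ext i j
    simp only [Matrix.conjTranspose_apply, Matrix.transpose_apply, star_trivial]
    exact (h.apply i j).symm
  have hsub : spectrum ℝ (A ⊗ₖ B) ⊆ ↑(pmPows (t + t' - 1)) := by
    intro x hx
    obtain ⟨a, haS, b, hbS, rfl⟩ := spectrum_kron_subset A B hAH hBH hx
    rw [hAspec] at haS
    rw [hBspec] at hbS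
    exact mul_mem_pmPows ht1 ht1' haS hbS
  have hcard : (spectrum ℝ (A ⊗ₖ B)).ncard ≤ s + s' - 2 := by
    calc (spectrum ℝ (A ⊗ₖ B)).ncard
        ≤ (↑(pmPows (t + t' - 1)) : Set ℝ).ncard :=
          Set.ncard_le_ncard hsub (Finset.finite_toSet _)
      _ = (pmPows (t + t' - 1)).card := by rw [Set.ncard_coe_finset]
      _ = 2 * (t + t' - 1) := pmPows_card _
      _ ≤ s + s' - 2 := by omega
  refine le_trans (Nat.sInf_le ⟨A ⊗ₖ B, hM, rfl⟩) hcard
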